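/- The generating function of the separable permutation counts evaluated at x = 3 − 2√2 converges and equals √2 − 1, i.e., ∑_{n=1}^∞ s_n (3 − 2√2)^n = √2 − 1. -/

import Mathlib

open Equiv Finset Filter Topology

/-- Direct sum of permutations: `(σ⊕τ)(i)=σ(i)` for `i<k`, `(σ⊕τ)(k+i)=k+τ(i)`. -/
def directSum {k l : ℕ} (σ : Equiv.Perm (Fin k)) (τ : Equiv.Perm (Fin l)) :
    Equiv.Perm (Fin (k + l)) :=
  finSumFinEquiv.symm.trans ((Equiv.sumCongr σ τ).trans finSumFinEquiv)

/-- Skew sum of permutations: `(σ⊖τ)(i)=σ(i)+l` for `i<k`, `(σ⊖τ)(k+i)=τ(i)`. -/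
def skewSum {k l : ℕ} (σ : Equiv.Perm (Fin k)) (τ : Equiv.Perm (Fin l)) :
    Equiv.Perm (Fin (k + l)) :=
  finSumFinEquiv.symm.trans ((Equiv.sumCongr σ τ).trans
    ((Equiv.sumComm (Fin k) (Fin l)).trans (finSumFinEquiv.trans (finCongr (Nat.add_comm l k)))))

/-- A permutation is separable if it is the singleton or a direct or skew sum of
two separable permutations. -/
inductive Separable : {n : ℕ} → Equiv.Perm (Fin n) → Prop where
  | single : Separable (Equiv.refl (Fin 1))
  | dsum {k l : ℕ} {σ : Equiv.Perm (Fin k)} {τ : Equiv.Perm (Fin l)} :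
      Separable σ → Separable τ → Separable (directSum σ τ)
  | ssum {k l : ℕ} {σ : Equiv.Perm (Fin k)} {τ : Equiv.Perm (Fin l)} :
      Separable σ → Separable τ → Separable (skewSum σ τ)

/-- `numSep n` = number of separable permutations of `[n]` (denoted `s_n`). -/
noncomputable def numSep (n : ℕ) : ℕ := Nat.card {σ : Equiv.Perm (Fin n) // Separable σ}


/-! ### value lemmas -/

lemma directSum_val_left {k l : ℕ} (σ : Perm (Fin k)) (τ : Perm (Fin l))
    (i : Fin (k + l)) (h : (i : ℕ) < k) :
    ((directSum σ τ) i : ℕ) = σ ⟨i, h⟩ := by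
  obtain ⟨v, hv⟩ := i
  simp only [Fin.val_mk] at h ⊢
  have : (⟨v, hv⟩ : Fin (k + l)) = Fin.castAdd l ⟨v, h⟩ := by ext; rfl
  rw [this]
  simp only [directSum, Equiv.trans_apply, finSumFinEquiv_symm_apply_castAdd,
    Equiv.sumCongr_apply, Sum.map_inl, finSumFinEquiv_apply_left, Fin.coe_castAdd]

lemma directSum_val_right {k l : ℕ} (σ : Perm (Fin k)) (τ : Perm (Fin l))
    (i : Fin (k + l)) (h : k ≤ (i : ℕ)) :
    ((directSum σ τ) i : ℕ) = k + τ ⟨i - k, by omega⟩ := by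
  obtain ⟨v, hv⟩ := i
  simp only [Fin.val_mk] at h ⊢
  generalize_proofs hp
  have : (⟨v, hv⟩ : Fin (k + l)) = Fin.natAdd k ⟨v - k, hp⟩ := by ext; simp; omega
  rw [this]
  simp only [directSum, Equiv.trans_apply, finSumFinEquiv_symm_apply_natAdd,
    Equiv.sumCongr_apply, Sum.map_inr, finSumFinEquiv_apply_right, Fin.coe_natAdd]

lemma skewSum_val_left {k l : ℕ} (σ : Perm (Fin k)) (τ : Perm (Fin l))
    (i : Fin (k + l)) (h : (i : ℕ) < k) :
    ((skewSum σ τ) i : ℕ) = l + σ ⟨i, h⟩ := by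
  obtain ⟨v, hv⟩ := i
  simp only [Fin.val_mk] at h ⊢
  have : (⟨v, hv⟩ : Fin (k + l)) = Fin.castAdd l ⟨v, h⟩ := by ext; rfl
  rw [this]
  simp only [skewSum, Equiv.trans_apply, finSumFinEquiv_symm_apply_castAdd,
    Equiv.sumCongr_apply, Sum.map_inl, Equiv.sumComm_apply, Sum.swap_inl,
    finSumFinEquiv_apply_right, finCongr_apply, Fin.coe_cast, Fin.coe_natAdd]

lemma skewSum_val_right {k l : ℕ} (σ : Perm (Fin k)) (τ : Perm (Fin l))
    (i : Fin (k + l)) (h : k ≤ (i : ℕ)) :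
    ((skewSum σ τ) i : ℕ) = τ ⟨i - k, by omega⟩ := by
  obtain ⟨v, hv⟩ := i
  simp only [Fin.val_mk] at h ⊢
  generalize_proofs hp
  have : (⟨v, hv⟩ : Fin (k + l)) = Fin.natAdd k ⟨v - k, hp⟩ := by ext; simp; omega
  rw [this]
  simp only [skewSum, Equiv.trans_apply, finSumFinEquiv_symm_apply_natAdd,
    Equiv.sumCongr_apply, Sum.map_inr, Equiv.sumComm_apply, Sum.swap_inr,
    finSumFinEquiv_apply_left, finCongr_apply, Fin.coe_cast, Fin.coe_castAdd]

/-! ### sizes -/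

lemma Separable.one_le : ∀ {n : ℕ} {π : Perm (Fin n)}, Separable π → 1 ≤ n := by
  intro n π h
  induction h with
  | single => omega
  | dsum _ _ ih1 ih2 => omega
  | ssum _ _ ih1 ih2 => omega

/-! ### splits -/

def IsSplit {n : ℕ} (π : Perm (Fin n)) (k : ℕ) : Prop :=
  ∀ i : Fin n, ((i : ℕ) < k ↔ ((π i : ℕ) < k))

def IsCoSplit {n : ℕ} (π : Perm (Fin n)) (k : ℕ) : Prop :=
  ∀ i : Fin n, ((i : ℕ) < k ↔ (n - k ≤ (π i : ℕ)))

def HasSplit {n : ℕ} (π : Perm (Fin n)) : Prop := ∃ k, 0 < k ∧ k < n ∧ IsSplit π k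

def HasCoSplit {n : ℕ} (π : Perm (Fin n)) : Prop := ∃ k, 0 < k ∧ k < n ∧ IsCoSplit π k

lemma isSplit_directSum {k l : ℕ} (σ : Perm (Fin k)) (τ : Perm (Fin l)) :
    IsSplit (directSum σ τ) k := by
  intro i
  rcases lt_or_ge (i : ℕ) k with h | h
  · simp only [h, true_iff, directSum_val_left σ τ i h]
    exact (σ ⟨i, h⟩).2
  · simp only [Nat.not_lt_of_le h, false_iff, directSum_val_right σ τ i h]
    omega

lemma isCoSplit_skewSum {k l : ℕ} (σ : Perm (Fin k)) (τ : Perm (Fin l)) :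
    IsCoSplit (skewSum σ τ) k := by
  intro i
  rcases lt_or_ge (i : ℕ) k with h | h
  · simp only [h, true_iff, skewSum_val_left σ τ i h]
    omega
  · simp only [Nat.not_lt_of_le h, false_iff, skewSum_val_right σ τ i h]
    have := (τ ⟨i - k, by omega⟩).2
    omega

lemma not_isSplit_isCoSplit {n : ℕ} {π : Perm (Fin n)} {k j : ℕ}
    (hk0 : 0 < k) (hkn : k < n) (hj0 : 0 < j) (hjn : j < n)
    (hs : IsSplit π k) (hcs : IsCoSplit π j) : False := by
  have h0 : (0 : ℕ) < n := by omega
  have h1 := hs ⟨0, h0⟩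
  have h2 := hcs ⟨0, h0⟩
  have h3 := hs ⟨n - 1, by omega⟩
  have h4 := hcs ⟨n - 1, by omega⟩
  have b1 := (π ⟨0, h0⟩).2
  have b2 := (π ⟨n - 1, by omega⟩).2
  simp only [Fin.val_mk] at h1 h2 h3 h4
  omega

/-! ### permCast -/

def permCast {m n : ℕ} (h : m = n) (π : Perm (Fin m)) : Perm (Fin n) :=
  (finCongr h).permCongr π

lemma permCast_val {m n : ℕ} (h : m = n) (π : Perm (Fin m)) (i : Fin n) :
    ((permCast h π) i : ℕ) = (π ⟨i, by omega⟩ : ℕ) := by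
  subst h
  simp [permCast, Equiv.permCongr_apply]

lemma permCast_rfl {m : ℕ} (π : Perm (Fin m)) : permCast rfl π = π := by
  ext i
  simp [permCast]

lemma Separable.permCast {m n : ℕ} (h : m = n) {π : Perm (Fin m)} (hs : Separable π) :
    Separable (permCast h π) := by
  subst h
  rwa [permCast_rfl]

lemma isSplit_permCast_iff {m n : ℕ} (h : m = n) (π : Perm (Fin m)) (k : ℕ) :
    IsSplit (permCast h π) k ↔ IsSplit π k := by
  subst h
  rw [permCast_rfl]

/-! ### leftPerm / rightPerm -/

lemma IsSplit.inv {n k : ℕ} {π : Perm (Fin n)} (hs : IsSplit π k) : IsSplit π⁻¹ k := by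
  intro i
  have := hs (π⁻¹ i)
  simpa using this.symm

def leftPerm {n : ℕ} (π : Perm (Fin n)) (k : ℕ) (hk : k ≤ n) (hs : IsSplit π k) :
    Perm (Fin k) where
  toFun i := ⟨(π ⟨i, by omega⟩ : ℕ), (hs ⟨i, by omega⟩).1 i.2⟩
  invFun i := ⟨(π⁻¹ ⟨i, by omega⟩ : ℕ), (hs.inv ⟨i, by omega⟩).1 i.2⟩
  left_inv i := by
    ext
    simp only [Fin.val_mk]
    have : (⟨(π ⟨i, by omega⟩ : ℕ), by omega⟩ : Fin n) = π ⟨i, by omega⟩ := rfl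
    rw [this]
    simp
  right_inv i := by
    ext
    simp only [Fin.val_mk]
    have : (⟨(π⁻¹ ⟨i, by omega⟩ : ℕ), by omega⟩ : Fin n) = π⁻¹ ⟨i, by omega⟩ := rfl
    rw [this]
    simp

lemma leftPerm_val {n : ℕ} (π : Perm (Fin n)) (k : ℕ) (hk : k ≤ n) (hs : IsSplit π k)
    (i : Fin k) : ((leftPerm π k hk hs) i : ℕ) = (π ⟨i, by omega⟩ : ℕ) := rfl

def rightPerm {n : ℕ} (π : Perm (Fin n)) (k l : ℕ) (h : n = k + l) (hs : IsSplit π k) :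
    Perm (Fin l) where
  toFun j := ⟨(π ⟨k + j, by omega⟩ : ℕ) - k, by
    have h1 : ¬ ((π ⟨k + j, by omega⟩ : ℕ) < k) := by
      rw [← hs ⟨k + j, by omega⟩]; simp
    have h2 := (π ⟨k + (j : ℕ), by omega⟩).2
    omega⟩
  invFun j := ⟨(π⁻¹ ⟨k + j, by omega⟩ : ℕ) - k, by
    have h1 : ¬ ((π⁻¹ ⟨k + j, by omega⟩ : ℕ) < k) := by
      rw [← hs.inv ⟨k + j, by omega⟩]; simp
    have h2 := (π⁻¹ ⟨k + (j : ℕ), by omega⟩).2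
    omega⟩
  left_inv j := by
    have h1 : ¬ ((π ⟨k + j, by omega⟩ : ℕ) < k) := by
      rw [← hs ⟨k + j, by omega⟩]; simp
    ext
    simp only [Fin.val_mk]
    have : (⟨k + ((π ⟨k + j, by omega⟩ : ℕ) - k), by omega⟩ : Fin n)
        = π ⟨k + j, by omega⟩ := by ext; simp; omega
    rw [this]
    simp
  right_inv j := by
    have h1 : ¬ ((π⁻¹ ⟨k + j, by omega⟩ : ℕ) < k) := by
      rw [← hs.inv ⟨k + j, by omega⟩]; simp
    ext
    simp only [Fin.val_mk]
    have : (⟨k + ((π⁻¹ ⟨k + j, by omega⟩ : ℕ) - k), by omega⟩ : Fin n)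
        = π⁻¹ ⟨k + j, by omega⟩ := by ext; simp only [Fin.val_mk]; omega
    rw [this]
    simp

lemma rightPerm_val {n : ℕ} (π : Perm (Fin n)) (k l : ℕ) (h : n = k + l) (hs : IsSplit π k)
    (j : Fin l) : ((rightPerm π k l h hs) j : ℕ) = (π ⟨k + j, by omega⟩ : ℕ) - k := rfl

lemma rightPerm_val_ge {n : ℕ} (π : Perm (Fin n)) (k l : ℕ) (h : n = k + l) (hs : IsSplit π k)
    (j : Fin l) : k ≤ (π ⟨k + j, by omega⟩ : ℕ) := by
  have h1 : ¬ ((π ⟨k + j, by omega⟩ : ℕ) < k) := by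
    rw [← hs ⟨k + j, by omega⟩]; simp
  omega

/-- Reconstruction. -/
lemma eq_directSum_of_isSplit {n : ℕ} (π : Perm (Fin n)) (k l : ℕ) (h : n = k + l)
    (hs : IsSplit π k) :
    π = permCast h.symm (directSum (leftPerm π k (by omega) hs) (rightPerm π k l h hs)) := by
  ext i
  rw [permCast_val]
  rcases lt_or_ge (i : ℕ) k with hik | hik
  · rw [directSum_val_left _ _ _ (by simpa using hik)]
    rw [leftPerm_val]
  · rw [directSum_val_right _ _ _ (by simpa using hik)]
    rw [rightPerm_val]
    have hge := rightPerm_val_ge π k l h hs ⟨(i : ℕ) - k, by omega⟩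
    have : (⟨k + (⟨(i : ℕ) - k, by omega⟩ : Fin l), by omega⟩ : Fin n) = ⟨i, by omega⟩ := by
      ext; simp; omega
    rw [this] at hge ⊢
    have : (⟨(i : ℕ), by omega⟩ : Fin n) = i := by ext; rfl
    rw [this] at hge ⊢
    omega

/-- Recovery of left component. -/
lemma leftPerm_permCast_directSum {k l : ℕ} (σ : Perm (Fin k)) (τ : Perm (Fin l))
    {n : ℕ} (h : k + l = n) (hk : k ≤ n) (hs : IsSplit (permCast h (directSum σ τ)) k) :
    leftPerm (permCast h (directSum σ τ)) k hk hs = σ := by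
  ext i
  rw [leftPerm_val, permCast_val]
  rw [directSum_val_left _ _ _ (by simpa using i.2)]

/-- Recovery of right component. -/
lemma rightPerm_permCast_directSum {k l : ℕ} (σ : Perm (Fin k)) (τ : Perm (Fin l))
    {n : ℕ} (h : k + l = n) (h' : n = k + l) (hs : IsSplit (permCast h (directSum σ τ)) k) :
    rightPerm (permCast h (directSum σ τ)) k l h' hs = τ := by
  ext j
  rw [rightPerm_val, permCast_val]
  rw [directSum_val_right _ _ _ (by simp)]
  simp

/-! ### transfer lemmas for directSum components -/

lemma perm_val_congr {m : ℕ} (σ : Perm (Fin m)) {a b : Fin m} (h : (a : ℕ) = (b : ℕ)) :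
    (σ a : ℕ) = (σ b : ℕ) := by
  have : a = b := Fin.ext h
  rw [this]

lemma isSplit_directSum_left {k1 l1 : ℕ} (σ : Perm (Fin k1)) (τ : Perm (Fin l1)) {k : ℕ}
    (hk : k ≤ k1) (hs : IsSplit (directSum σ τ) k) : IsSplit σ k := by
  intro i
  have h := hs ⟨i, by omega⟩
  rw [directSum_val_left σ τ ⟨i, by omega⟩ (by simpa using i.2)] at h
  simp only [Fin.val_mk] at h ⊢
  have hidx : (⟨(i : ℕ), by simpa using i.2⟩ : Fin k1) = i := by ext; rfl
  rwa [hidx] at h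

lemma isSplit_directSum_right {k1 l1 : ℕ} (σ : Perm (Fin k1)) (τ : Perm (Fin l1)) {k : ℕ}
    (hk1 : k1 ≤ k) (hs : IsSplit (directSum σ τ) k) : IsSplit τ (k - k1) := by
  intro j
  have h := hs ⟨k1 + j, by omega⟩
  rw [directSum_val_right σ τ ⟨k1 + j, by omega⟩ (by simp)] at h
  simp only [Fin.val_mk] at h ⊢
  have hidx : (⟨k1 + (j : ℕ) - k1, by omega⟩ : Fin l1) = j := by ext; simp only [Fin.val_mk]; omega
  rw [hidx] at h
  omega

lemma leftPerm_directSum {k l : ℕ} (σ : Perm (Fin k)) (τ : Perm (Fin l))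
    (hk : k ≤ k + l) (hs : IsSplit (directSum σ τ) k) :
    leftPerm (directSum σ τ) k hk hs = σ := by
  ext i
  rw [leftPerm_val, directSum_val_left σ τ ⟨i, by omega⟩ (by simpa using i.2)]

lemma rightPerm_directSum {k l : ℕ} (σ : Perm (Fin k)) (τ : Perm (Fin l))
    (h : k + l = k + l) (hs : IsSplit (directSum σ τ) k) :
    rightPerm (directSum σ τ) k l h hs = τ := by
  ext j
  rw [rightPerm_val, directSum_val_right σ τ ⟨k + j, by omega⟩ (by simp)]
  try simp only [Fin.val_mk]
  have hidx : (⟨k + (j : ℕ) - k, by omega⟩ : Fin l) = j := by ext; simp only [Fin.val_mk]; omega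
  rw [hidx]
  omega

lemma leftPerm_directSum_of_le {k1 l1 : ℕ} (σ : Perm (Fin k1)) (τ : Perm (Fin l1)) {k : ℕ}
    (hk : k ≤ k1) (hs : IsSplit (directSum σ τ) k) (hsσ : IsSplit σ k)
    (hk' : k ≤ k1 + l1) (hk'' : k ≤ k1) :
    leftPerm (directSum σ τ) k hk' hs = leftPerm σ k hk'' hsσ := by
  ext i
  rw [leftPerm_val, leftPerm_val, directSum_val_left σ τ ⟨i, by omega⟩ (by simp only [Fin.val_mk]; omega)]

set_option maxHeartbeats 1600000 in
lemma rightPerm_directSum_of_le {k1 l1 : ℕ} (σ : Perm (Fin k1)) (τ : Perm (Fin l1)) {k l : ℕ}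
    (hk0 : 0 < k) (hk : k < k1) (hn : k1 + l1 = k + l) (hs : IsSplit (directSum σ τ) k)
    (hsσ : IsSplit σ k) :
    rightPerm (directSum σ τ) k l hn hs
      = permCast (show (k1 - k) + l1 = l by omega)
          (directSum (rightPerm σ k (k1 - k) (by omega) hsσ) τ) := by
  ext j
  rw [rightPerm_val, permCast_val]
  try simp only [Fin.val_mk]
  rcases lt_or_ge (j : ℕ) (k1 - k) with hj | hj
  · rw [directSum_val_left (rightPerm σ k (k1 - k) (by omega) hsσ) τ ⟨j, by omega⟩
      (by simpa using hj)]
    rw [rightPerm_val]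
    rw [directSum_val_left σ τ ⟨k + (j : ℕ), by omega⟩ (by simp only [Fin.val_mk]; omega)]
  · rw [directSum_val_right (rightPerm σ k (k1 - k) (by omega) hsσ) τ ⟨j, by omega⟩
      (by simpa using hj)]
    rw [directSum_val_right σ τ ⟨k + j, by omega⟩ (by simp only [Fin.val_mk]; omega)]
    try simp only [Fin.val_mk]
    have hidx : (⟨k + (j : ℕ) - k1, by omega⟩ : Fin l1)
        = ⟨(j : ℕ) - (k1 - k), by omega⟩ := by ext; simp only [Fin.val_mk]; omega
    rw [hidx]
    omega

lemma leftPerm_directSum_of_ge {k1 l1 : ℕ} (σ : Perm (Fin k1)) (τ : Perm (Fin l1)) {k : ℕ}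
    (hk1 : k1 ≤ k) (hkn : k ≤ k1 + l1) (hs : IsSplit (directSum σ τ) k)
    (hsτ : IsSplit τ (k - k1)) :
    leftPerm (directSum σ τ) k hkn hs
      = permCast (show k1 + (k - k1) = k by omega)
          (directSum σ (leftPerm τ (k - k1) (by omega) hsτ)) := by
  ext i
  rw [leftPerm_val, permCast_val]
  rcases lt_or_ge (i : ℕ) k1 with hi | hi
  · rw [directSum_val_left σ (leftPerm τ (k - k1) (by omega) hsτ) ⟨i, by omega⟩
      (by simpa using hi)]
    rw [directSum_val_left σ τ ⟨i, by omega⟩ (by simpa using hi)]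
  · rw [directSum_val_right σ (leftPerm τ (k - k1) (by omega) hsτ) ⟨i, by omega⟩
      (by simpa using hi)]
    rw [directSum_val_right σ τ ⟨i, by omega⟩ (by simpa using hi)]
    rw [leftPerm_val]

lemma rightPerm_directSum_of_ge {k1 l1 : ℕ} (σ : Perm (Fin k1)) (τ : Perm (Fin l1)) {k l : ℕ}
    (hk1 : k1 ≤ k) (hn : k1 + l1 = k + l) (hs : IsSplit (directSum σ τ) k)
    (hsτ : IsSplit τ (k - k1)) :
    rightPerm (directSum σ τ) k l hn hs
      = rightPerm τ (k - k1) l (by omega) hsτ := by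
  ext j
  rw [rightPerm_val, rightPerm_val]
  rw [directSum_val_right σ τ ⟨k + j, by omega⟩ (by simp only [Fin.val_mk]; omega)]
  try simp only [Fin.val_mk]
  have hidx : (⟨k + (j : ℕ) - k1, by omega⟩ : Fin l1)
      = ⟨k - k1 + (j : ℕ), by omega⟩ := by ext; simp only [Fin.val_mk]; omega
  rw [hidx]
  omega

/-! ### the components of a split of a separable permutation are separable -/

lemma separable_parts : ∀ {n : ℕ} {π : Perm (Fin n)}, Separable π →
    ∀ k l (hn : n = k + l), 1 ≤ k → 1 ≤ l → ∀ hs : IsSplit π k,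
    Separable (leftPerm π k (by omega) hs) ∧ Separable (rightPerm π k l hn hs) := by
  intro n π hsep
  induction hsep with
  | single =>
    intro k l hn hk hl hs
    omega
  | @dsum k1 l1 σ τ hσ hτ ihσ ihτ =>
    intro k l hn hk hl hs
    have hk1 : 1 ≤ k1 := hσ.one_le
    have hl1 : 1 ≤ l1 := hτ.one_le
    rcases lt_trichotomy k k1 with hlt | heq | hgt
    · have hsσ : IsSplit σ k := isSplit_directSum_left σ τ (le_of_lt hlt) hs
      obtain ⟨hα, hβ⟩ := ihσ k (k1 - k) (by omega) hk (by omega) hsσ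
      constructor
      · rw [leftPerm_directSum_of_le σ τ (le_of_lt hlt) hs hsσ (by omega) (by omega)]
        exact hα
      · rw [rightPerm_directSum_of_le σ τ (by omega) hlt hn hs hsσ]
        exact (Separable.dsum hβ hτ).permCast _
    · subst heq
      have hll : l = l1 := by omega
      subst hll
      constructor
      · rw [leftPerm_directSum σ τ (by omega) hs]
        exact hσ
      · rw [rightPerm_directSum σ τ hn hs]
        exact hτ
    · have hsτ : IsSplit τ (k - k1) := isSplit_directSum_right σ τ (le_of_lt hgt) hs
      obtain ⟨hα, hβ⟩ := ihτ (k - k1) l (by omega) (by omega) hl hsτ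
      constructor
      · rw [leftPerm_directSum_of_ge σ τ (by omega) (by omega) hs hsτ]
        exact (Separable.dsum hσ hα).permCast _
      · rw [rightPerm_directSum_of_ge σ τ (by omega) hn hs hsτ]
        exact hβ
  | @ssum k1 l1 σ τ hσ hτ ihσ ihτ =>
    intro k l hn hk hl hs
    have hk1 : 1 ≤ k1 := hσ.one_le
    have hl1 : 1 ≤ l1 := hτ.one_le
    exact absurd hs (fun hs => not_isSplit_isCoSplit (k := k) (j := k1) (by omega) (by omega)
      (by omega) (by omega) hs (isCoSplit_skewSum σ τ))

/-! ### reversal -/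

lemma trans_rev_val {n : ℕ} (π : Perm (Fin n)) (i : Fin n) :
    ((π.trans Fin.revPerm) i : ℕ) = n - ((π i : ℕ) + 1) := by
  simp [Fin.val_rev]

lemma trans_rev_directSum {k l : ℕ} (σ : Perm (Fin k)) (τ : Perm (Fin l)) :
    (directSum σ τ).trans Fin.revPerm
      = skewSum (σ.trans Fin.revPerm) (τ.trans Fin.revPerm) := by
  ext i
  rw [trans_rev_val]
  rcases lt_or_ge (i : ℕ) k with hi | hi
  · rw [directSum_val_left σ τ i hi, skewSum_val_left _ _ i hi, trans_rev_val]
    have := (σ ⟨(i : ℕ), hi⟩).2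
    omega
  · rw [directSum_val_right σ τ i hi, skewSum_val_right _ _ i hi, trans_rev_val]
    have := (τ ⟨(i : ℕ) - k, by omega⟩).2
    omega

lemma trans_rev_skewSum {k l : ℕ} (σ : Perm (Fin k)) (τ : Perm (Fin l)) :
    (skewSum σ τ).trans Fin.revPerm
      = directSum (σ.trans Fin.revPerm) (τ.trans Fin.revPerm) := by
  ext i
  rw [trans_rev_val]
  rcases lt_or_ge (i : ℕ) k with hi | hi
  · rw [skewSum_val_left σ τ i hi, directSum_val_left _ _ i hi, trans_rev_val]
    have := (σ ⟨(i : ℕ), hi⟩).2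
    omega
  · rw [skewSum_val_right σ τ i hi, directSum_val_right _ _ i hi, trans_rev_val]
    have := (τ ⟨(i : ℕ) - k, by omega⟩).2
    omega

lemma Separable.rev {n : ℕ} {π : Perm (Fin n)} (h : Separable π) :
    Separable (π.trans Fin.revPerm) := by
  induction h with
  | single =>
    have : (Equiv.refl (Fin 1)).trans Fin.revPerm = Equiv.refl (Fin 1) := by
      ext i
      omega
    rw [this]
    exact Separable.single
  | dsum hσ hτ ih1 ih2 =>
    rw [trans_rev_directSum]
    exact Separable.ssum ih1 ih2
  | ssum hσ hτ ih1 ih2 =>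
    rw [trans_rev_skewSum]
    exact Separable.dsum ih1 ih2

lemma trans_rev_rev {n : ℕ} (π : Perm (Fin n)) :
    (π.trans Fin.revPerm).trans Fin.revPerm = π := by
  ext i
  simp

lemma isSplit_trans_rev_iff {n : ℕ} (π : Perm (Fin n)) (k : ℕ) (hk : k ≤ n) :
    IsSplit (π.trans Fin.revPerm) k ↔ IsCoSplit π k := by
  constructor <;> intro h i <;> have hi := h i <;>
    rw [trans_rev_val] at * <;> have := (π i).2 <;> omega

/-! ### trichotomy and exclusivity -/

lemma not_hasSplit_hasCoSplit {n : ℕ} {π : Perm (Fin n)}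
    (h1 : HasSplit π) (h2 : HasCoSplit π) : False := by
  obtain ⟨k, hk0, hkn, hs⟩ := h1
  obtain ⟨j, hj0, hjn, hcs⟩ := h2
  exact not_isSplit_isCoSplit hk0 hkn hj0 hjn hs hcs

lemma Separable.hasSplit_or_hasCoSplit {n : ℕ} {π : Perm (Fin n)} (h : Separable π)
    (hn : 2 ≤ n) : HasSplit π ∨ HasCoSplit π := by
  cases h with
  | single => omega
  | @dsum k1 l1 σ τ hσ hτ =>
    have h1 := hσ.one_le
    have h2 := hτ.one_le
    exact Or.inl ⟨k1, by omega, by omega, isSplit_directSum σ τ⟩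
  | @ssum k1 l1 σ τ hσ hτ =>
    have h1 := hσ.one_le
    have h2 := hτ.one_le
    exact Or.inr ⟨k1, by omega, by omega, isCoSplit_skewSum σ τ⟩

/-! ### lifting splits between π and leftPerm -/

lemma isSplit_of_isSplit_leftPerm {n k j : ℕ} {π : Perm (Fin n)} (hk : k ≤ n)
    (hs : IsSplit π k) (hjk : j < k) (hsj : IsSplit (leftPerm π k hk hs) j) :
    IsSplit π j := by
  intro i
  rcases lt_or_ge (i : ℕ) k with hik | hik
  · have h2 := hsj ⟨i, hik⟩
    rw [leftPerm_val] at h2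
    simp only [Fin.val_mk] at h2
    have hidx : (⟨(i : ℕ), by omega⟩ : Fin n) = i := by ext; rfl
    rwa [hidx] at h2
  · have h1 := hs i
    constructor <;> intro <;> omega

lemma isSplit_leftPerm_of_isSplit {n k j : ℕ} {π : Perm (Fin n)} (hk : k ≤ n)
    (hs : IsSplit π k) (hjk : j ≤ k) (hsj : IsSplit π j) :
    IsSplit (leftPerm π k hk hs) j := by
  intro i
  rw [leftPerm_val]
  have := hsj ⟨(i : ℕ), by omega⟩
  simpa using this

/-! ### minimal splits -/

def MinSplitAt {n : ℕ} (π : Perm (Fin n)) (k : ℕ) : Prop :=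
  IsSplit π k ∧ 0 < k ∧ k < n ∧ ∀ j, 0 < j → j < k → ¬ IsSplit π j

open scoped Classical in
noncomputable def minSplit' {n : ℕ} (π : Perm (Fin n)) : ℕ :=
  if h : HasSplit π then Nat.find h else 0

lemma minSplitAt_minSplit' {n : ℕ} {π : Perm (Fin n)} (h : HasSplit π) :
    MinSplitAt π (minSplit' π) := by
  classical
  rw [minSplit']
  rw [dif_pos h]
  obtain ⟨h1, h2, h3⟩ := Nat.find_spec h
  refine ⟨h3, h1, h2, fun j hj0 hjk hsj => ?_⟩
  exact Nat.find_min h hjk ⟨hj0, by omega, hsj⟩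

lemma minSplit'_eq {n : ℕ} {π : Perm (Fin n)} {k : ℕ} (h : MinSplitAt π k) :
    minSplit' π = k := by
  classical
  obtain ⟨hs, hk0, hkn, hmin⟩ := h
  have hh : HasSplit π := ⟨k, hk0, hkn, hs⟩
  have h1 := minSplitAt_minSplit' hh
  obtain ⟨hs', hk0', hkn', hmin'⟩ := h1
  rcases lt_trichotomy (minSplit' π) k with hlt | heq | hgt
  · exact absurd hs' (hmin _ hk0' hlt)
  · exact heq
  · exact absurd hs (hmin' _ hk0 hgt)

/-! ### the decomposition equivalence at a fixed minimal split -/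

variable {n : ℕ}

noncomputable def decompEquiv (n k : ℕ) (hk1 : 1 ≤ k) (hkn : k < n) :
    {π : Perm (Fin n) // Separable π ∧ MinSplitAt π k} ≃
      ({α : Perm (Fin k) // Separable α ∧ ¬ HasSplit α} ×
       {ρ : Perm (Fin (n - k)) // Separable ρ}) where
  toFun x :=
    let π := x.1
    let hs : IsSplit π k := x.2.2.1
    have hparts := separable_parts x.2.1 k (n - k) (by omega) (by omega) (by omega) hs
    (⟨leftPerm π k (by omega) hs, hparts.1, by
        rintro ⟨j, hj0, hjk, hsj⟩
        exact x.2.2.2.2.2 j hj0 hjk (isSplit_of_isSplit_leftPerm (by omega) hs hjk hsj)⟩,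
     ⟨rightPerm π k (n - k) (by omega) hs, hparts.2⟩)
  invFun y :=
    ⟨permCast (show k + (n - k) = n by omega) (directSum y.1.1 y.2.1), by
      constructor
      · exact (Separable.dsum y.1.2.1 y.2.2).permCast _
      · refine ⟨(isSplit_permCast_iff _ _ _).2 (isSplit_directSum _ _), by omega, by omega,
          fun j hj0 hjk hsj => ?_⟩
        have := isSplit_directSum_left y.1.1 y.2.1 (by omega)
          ((isSplit_permCast_iff _ _ _).1 hsj)
        exact y.1.2.2 ⟨j, hj0, hjk, this⟩⟩
  left_inv x := by
    apply Subtype.ext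
    exact (eq_directSum_of_isSplit x.1 k (n - k) (by omega) x.2.2.1).symm
  right_inv y := by
    ext : 1
    · apply Subtype.ext
      dsimp only
      rw [leftPerm_permCast_directSum]
    · apply Subtype.ext
      dsimp only
      rw [rightPerm_permCast_directSum]

/-! ### counting -/

noncomputable def numIndec (k : ℕ) : ℕ :=
  Nat.card {α : Perm (Fin k) // Separable α ∧ ¬ HasSplit α}

noncomputable def numDec (n : ℕ) : ℕ :=
  Nat.card {π : Perm (Fin n) // Separable π ∧ HasSplit π}

lemma numSep_zero : numSep 0 = 0 := by
  have : IsEmpty {σ : Perm (Fin 0) // Separable σ} := by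
    constructor
    rintro ⟨σ, hσ⟩
    have := hσ.one_le
    omega
  simp [numSep, Nat.card_of_isEmpty]

lemma perm_fin_one_eq (σ : Perm (Fin 1)) : σ = Equiv.refl (Fin 1) := by
  ext i
  omega

lemma numSep_one : numSep 1 = 1 := by
  have : Unique {σ : Perm (Fin 1) // Separable σ} := by
    refine ⟨⟨⟨Equiv.refl (Fin 1), Separable.single⟩⟩, ?_⟩
    rintro ⟨σ, hσ⟩
    exact Subtype.ext (perm_fin_one_eq σ)
  rw [numSep]
  exact Nat.card_unique

lemma numIndec_one : numIndec 1 = 1 := by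
  have : Unique {α : Perm (Fin 1) // Separable α ∧ ¬ HasSplit α} := by
    refine ⟨⟨⟨Equiv.refl (Fin 1), Separable.single, ?_⟩⟩, ?_⟩
    · rintro ⟨k, hk0, hk1, -⟩
      omega
    · rintro ⟨σ, hσ⟩
      exact Subtype.ext (perm_fin_one_eq σ)
  rw [numIndec]
  exact Nat.card_unique

lemma numSep_eq_numDec_add_numIndec (n : ℕ) : numSep n = numDec n + numIndec n := by
  classical
  rw [numSep, numDec, numIndec]
  rw [← Nat.card_sum]
  apply Nat.card_congr
  exact (Equiv.trans (Equiv.sumCongr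
    (Equiv.subtypeSubtypeEquivSubtypeInter Separable HasSplit).symm
    (Equiv.subtypeSubtypeEquivSubtypeInter Separable (fun π => ¬ HasSplit π)).symm)
    (Equiv.sumCompl _)).symm

noncomputable def revEquiv (n : ℕ) (hn : 2 ≤ n) :
    {π : Perm (Fin n) // Separable π ∧ ¬ HasSplit π} ≃
    {π : Perm (Fin n) // Separable π ∧ HasSplit π} where
  toFun x := ⟨x.1.trans Fin.revPerm, x.2.1.rev, by
    rcases x.2.1.hasSplit_or_hasCoSplit hn with h | h
    · exact absurd h x.2.2
    · obtain ⟨k, hk0, hkn, hcs⟩ := h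
      exact ⟨k, hk0, hkn, (isSplit_trans_rev_iff x.1 k (by omega)).2 hcs⟩⟩
  invFun x := ⟨x.1.trans Fin.revPerm, x.2.1.rev, by
    rintro ⟨k, hk0, hkn, hs⟩
    have hcs : IsCoSplit x.1 k := (isSplit_trans_rev_iff x.1 k (by omega)).1 hs
    exact not_hasSplit_hasCoSplit x.2.2 ⟨k, hk0, hkn, hcs⟩⟩
  left_inv x := Subtype.ext (trans_rev_rev x.1)
  right_inv x := Subtype.ext (trans_rev_rev x.1)

lemma numIndec_eq_numDec {n : ℕ} (hn : 2 ≤ n) : numIndec n = numDec n :=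
  Nat.card_congr (revEquiv n hn)

lemma numSep_eq_two_mul_numIndec {n : ℕ} (hn : 2 ≤ n) : numSep n = 2 * numIndec n := by
  rw [numSep_eq_numDec_add_numIndec, numIndec_eq_numDec hn]
  omega

lemma numDec_eq_sum {n : ℕ} (hn : 2 ≤ n) :
    numDec n = ∑ k ∈ Finset.Ico 1 n, numIndec k * numSep (n - k) := by
  classical
  rw [numDec, Nat.card_eq_fintype_card, Fintype.card_subtype]
  rw [Finset.card_eq_sum_card_fiberwise (f := fun π => minSplit' π) (t := Finset.Ico 1 n)
    (fun π hπ => by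
      rw [Finset.mem_coe, Finset.mem_filter] at hπ
      obtain ⟨hs, hk0, hkn, -⟩ := minSplitAt_minSplit' hπ.2.2
      simp only [Finset.mem_coe, Finset.mem_Ico]
      omega)]
  refine Finset.sum_congr rfl fun k hk => ?_
  simp only [Finset.mem_Ico] at hk
  rw [Finset.filter_filter]
  have hcard : (Finset.univ.filter
      fun π : Perm (Fin n) => (Separable π ∧ HasSplit π) ∧ minSplit' π = k).card
      = Nat.card {π : Perm (Fin n) // Separable π ∧ MinSplitAt π k} := by
    rw [Nat.card_eq_fintype_card, Fintype.card_subtype]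
    congr 1
    apply Finset.filter_congr
    intro π _
    constructor
    · rintro ⟨⟨hsep, hhs⟩, hmk⟩
      subst hmk
      exact ⟨hsep, minSplitAt_minSplit' hhs⟩
    · rintro ⟨hsep, hms⟩
      have hhs : HasSplit π := ⟨k, hms.2.1, hms.2.2.1, hms.1⟩
      exact ⟨⟨hsep, hhs⟩, minSplit'_eq hms⟩
  rw [hcard, Nat.card_congr (decompEquiv n k (by omega) (by omega)), Nat.card_prod]
  rfl

lemma numSep_rec {n : ℕ} (hn : 2 ≤ n) :
    numSep n = 2 * numSep (n - 1) + ∑ k ∈ Finset.Ico 2 n, numSep k * numSep (n - k) := by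
  rw [numSep_eq_two_mul_numIndec hn, numIndec_eq_numDec hn, numDec_eq_sum hn]
  rw [Finset.sum_eq_sum_Ico_succ_bot (by omega : 1 < n)]
  rw [numIndec_one, one_mul, Nat.mul_add, Finset.mul_sum]
  congr 1
  apply Finset.sum_congr rfl
  intro k hk
  simp only [Finset.mem_Ico] at hk
  rw [← Nat.mul_assoc, ← numSep_eq_two_mul_numIndec (by omega)]

/-! ### the generating function at x = 3 - 2√2 -/

section Analysis

local notation "x" => (3 - 2 * Real.sqrt 2 : ℝ)
local notation "L" => (Real.sqrt 2 - 1 : ℝ)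

private lemma sqrt2_sq : Real.sqrt 2 ^ 2 = 2 := Real.sq_sqrt (by norm_num)

private lemma sqrt2_lt : Real.sqrt 2 < 3/2 := by
  nlinarith [sqrt2_sq, Real.sqrt_nonneg 2]

private lemma sqrt2_gt : (1 : ℝ) < Real.sqrt 2 := by
  nlinarith [sqrt2_sq, Real.sqrt_nonneg 2]

private lemma hx0 : (0 : ℝ) < x := by nlinarith [sqrt2_lt]

private lemma hL0 : (0 : ℝ) < L := by nlinarith [sqrt2_gt]

private lemma hxL : x = L ^ 2 := by nlinarith [sqrt2_sq]

private lemma hxlt : x < L := by nlinarith [sqrt2_sq, sqrt2_gt, sqrt2_lt]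

noncomputable def useq (m : ℕ) : ℝ := (numSep m : ℝ) * x ^ m

noncomputable def vseq (m : ℕ) : ℝ := if m < 2 then 0 else useq m

noncomputable def wseq (m : ℕ) : ℝ := ∑ p ∈ Finset.HasAntidiagonal.antidiagonal m, vseq p.1 * useq p.2

lemma useq_nonneg (m : ℕ) : 0 ≤ useq m := by
  have h := hx0
  rw [useq]
  positivity

lemma vseq_nonneg (m : ℕ) : 0 ≤ vseq m := by
  rw [vseq]
  split
  · exact le_refl _
  · exact useq_nonneg m

lemma useq_zero : useq 0 = 0 := by simp [useq, numSep_zero]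

lemma useq_one : useq 1 = x := by simp [useq, numSep_one]

lemma vseq_le (m : ℕ) : vseq m ≤ useq m := by
  rw [vseq]
  split
  · exact useq_nonneg m
  · exact le_refl _

lemma vseq_eq (m : ℕ) : vseq m = useq m - (if m = 1 then x else 0) := by
  rcases Nat.lt_or_ge m 2 with h | h
  · interval_cases m
    · simp [vseq, useq_zero]
    · simp [vseq, useq_one]
  · rw [vseq, if_neg (by omega), if_neg (by omega)]
    ring

lemma wseq_eq_sum_Ico {m : ℕ} (hm : 2 ≤ m) :
    wseq m = ∑ k ∈ Finset.Ico 2 m, useq k * useq (m - k) := by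
  rw [wseq, Finset.Nat.sum_antidiagonal_eq_sum_range_succ_mk]
  rw [Finset.range_eq_Ico]
  rw [← Finset.sum_subset (Finset.Ico_subset_Ico (by omega) (by omega) :
      Finset.Ico 2 m ⊆ Finset.Ico 0 (m + 1))]
  · apply Finset.sum_congr rfl
    intro k hk
    simp only [Finset.mem_Ico] at hk
    rw [vseq, if_neg (by omega)]
  · intro k hk hk2
    simp only [Finset.mem_Ico] at hk hk2
    rcases Nat.lt_or_ge k 2 with h | h
    · rw [vseq, if_pos h, zero_mul]
    · have hkm : k = m := by omega
      subst hkm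
      simp [useq_zero, vseq]

lemma useq_rec {m : ℕ} (hm : 2 ≤ m) :
    useq m = 2 * x * useq (m - 1) + wseq m := by
  rw [wseq_eq_sum_Ico hm]
  rw [useq, numSep_rec hm]
  push_cast
  rw [add_mul, Finset.sum_mul]
  congr 1
  · rw [useq]
    have hxp : x ^ m = x * x ^ (m - 1) := by
      rw [← pow_succ']
      congr 1
      omega
    rw [hxp]
    ring
  · apply Finset.sum_congr rfl
    intro k hk
    simp only [Finset.mem_Ico] at hk
    rw [useq, useq]
    have hxp : x ^ m = x ^ k * x ^ (m - k) := by
      rw [← pow_add]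
      congr 1
      omega
    rw [hxp]
    ring

lemma conv_bound (M : ℕ) :
    ∑ m ∈ Finset.range M, wseq (m + 2)
      ≤ (∑ k ∈ Finset.range (M + 1), vseq k) * (∑ j ∈ Finset.range (M + 1), useq j) := by
  classical
  have hdisj : (↑(Finset.range M) : Set ℕ).PairwiseDisjoint
      (fun m => Finset.HasAntidiagonal.antidiagonal (m + 2)) := by
    intro a _ b _ hab
    simp only [Function.onFun]
    rw [Finset.disjoint_left]
    intro p hpa hpb
    simp only [Finset.HasAntidiagonal.mem_antidiagonal] at hpa hpb
    omega
  have h1 : ∑ m ∈ Finset.range M, wseq (m + 2)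
      = ∑ p ∈ (Finset.range M).biUnion (fun m => Finset.HasAntidiagonal.antidiagonal (m + 2)),
          vseq p.1 * useq p.2 := by
    rw [Finset.sum_biUnion hdisj]
    rfl
  rw [h1, Finset.sum_mul_sum]
  set B := (Finset.range M).biUnion (fun m => Finset.HasAntidiagonal.antidiagonal (m + 2)) with hB
  have h2 : ∑ p ∈ B, vseq p.1 * useq p.2
      = ∑ p ∈ B.filter (fun p => p.1 < M + 1 ∧ p.2 < M + 1), vseq p.1 * useq p.2 := by
    rw [Finset.sum_filter_of_ne]
    intro p hp hne
    simp only [hB, Finset.mem_biUnion, Finset.mem_range, Finset.HasAntidiagonal.mem_antidiagonal] at hp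
    obtain ⟨m, hm, hpm⟩ := hp
    have hv : vseq p.1 ≠ 0 := fun h => hne (by rw [h, zero_mul])
    have hu : useq p.2 ≠ 0 := fun h => hne (by rw [h, mul_zero])
    have hp1 : 2 ≤ p.1 := by
      by_contra h
      exact hv (by rw [vseq, if_pos (by omega)])
    have hp2 : 1 ≤ p.2 := by
      by_contra h
      have h0 : p.2 = 0 := by omega
      exact hu (by rw [h0, useq_zero])
    omega
  rw [h2]
  have h3 : B.filter (fun p => p.1 < M + 1 ∧ p.2 < M + 1)
      ⊆ Finset.range (M + 1) ×ˢ Finset.range (M + 1) := by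
    intro p hp
    simp only [Finset.mem_filter] at hp
    simp only [Finset.mem_product, Finset.mem_range]
    exact hp.2
  have h4 := Finset.sum_le_sum_of_subset_of_nonneg h3
    (fun p _ _ => mul_nonneg (vseq_nonneg p.1) (useq_nonneg p.2))
  refine le_trans h4 ?_
  rw [Finset.sum_product]

lemma partial_sum_v {M : ℕ} (hM : 1 ≤ M) :
    ∑ k ∈ Finset.range (M + 1), vseq k = (∑ j ∈ Finset.range (M + 1), useq j) - x := by
  have h : ∀ k, useq k - vseq k = if k = 1 then x else 0 := by
    intro k
    rw [vseq_eq]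
    ring
  have h2 : ∑ k ∈ Finset.range (M + 1), (useq k - vseq k) = x := by
    rw [Finset.sum_congr rfl (fun k _ => h k)]
    rw [Finset.sum_ite_eq' (Finset.range (M + 1)) 1 (fun _ => x)]
    rw [if_pos (Finset.mem_range.mpr (by omega))]
  rw [Finset.sum_sub_distrib] at h2
  linarith

lemma partial_sum_le : ∀ N, ∑ m ∈ Finset.range N, useq m ≤ L := by
  intro N
  induction N with
  | zero => simpa using le_of_lt hL0
  | succ N ih =>
    match N, ih with
    | 0, _ => simpa [useq_zero] using le_of_lt hL0
    | (M + 1), ih =>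
      rcases Nat.eq_zero_or_pos M with rfl | hM1
      · -- M = 0
          have h2 : ∑ m ∈ Finset.range 2, useq m = x := by
            rw [Finset.sum_range_succ, Finset.sum_range_one, useq_zero, useq_one, zero_add]
          rw [h2]
          exact le_of_lt hxlt
      · -- M ≥ 1
          set t := ∑ m ∈ Finset.range (M + 1), useq m with ht
          have ht0 : 0 ≤ t := Finset.sum_nonneg fun m _ => useq_nonneg m
          have e1 : ∑ m ∈ Finset.range (M + 2), useq m
              = (∑ i ∈ Finset.range (M + 1), useq (i + 1)) + useq 0 :=
            Finset.sum_range_succ' useq (M + 1)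
          have e2 : ∑ i ∈ Finset.range (M + 1), useq (i + 1)
              = (∑ i ∈ Finset.range M, useq (i + 2)) + useq 1 :=
            Finset.sum_range_succ' (fun i => useq (i + 1)) M
          have e3 : ∑ i ∈ Finset.range M, useq (i + 2)
              = 2 * x * (∑ i ∈ Finset.range M, useq (i + 1))
                + ∑ i ∈ Finset.range M, wseq (i + 2) := by
            rw [Finset.mul_sum, ← Finset.sum_add_distrib]
            apply Finset.sum_congr rfl
            intro i _
            have := useq_rec (m := i + 2) (by omega)
            simpa using this
          have e4 : (∑ i ∈ Finset.range M, useq (i + 1)) + useq 0 = t :=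
            (Finset.sum_range_succ' useq M).symm
          have e5 : ∑ i ∈ Finset.range M, useq (i + 1) = t := by
            rw [useq_zero, add_zero] at e4
            exact e4
          have e6 : ∑ i ∈ Finset.range M, wseq (i + 2) ≤ (t - x) * t := by
            have := conv_bound M
            rwa [partial_sum_v hM1, ← ht] at this
          rw [e1, e2, e3, e5, useq_zero, useq_one, add_zero]
          have hL2 := hxL
          nlinarith [mul_nonneg (sub_nonneg.2 ih) ht0, mul_nonneg (sub_nonneg.2 ih)
            (le_of_lt hL0), sq_nonneg (t - L), sqrt2_sq, hx0, hL0]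

end Analysis

/-! ### summability and the value of the sum -/

section Analysis2

local notation "x" => (3 - 2 * Real.sqrt 2 : ℝ)
local notation "L" => (Real.sqrt 2 - 1 : ℝ)

lemma useq_shift_summable : Summable (fun n : ℕ => useq (n + 1)) := by
  apply summable_of_sum_range_le (c := L) (fun n => useq_nonneg _)
  intro N
  have h := partial_sum_le (N + 1)
  have e : ∑ m ∈ Finset.range (N + 1), useq m
      = (∑ i ∈ Finset.range N, useq (i + 1)) + useq 0 :=
    Finset.sum_range_succ' useq N
  rw [e, useq_zero, add_zero] at h
  exact h

lemma useq_summable : Summable useq := (summable_nat_add_iff 1).1 useq_shift_summable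

lemma vseq_summable : Summable vseq :=
  useq_summable.of_nonneg_of_le vseq_nonneg vseq_le

lemma useq_norm_summable : Summable (fun m => ‖useq m‖) := summable_norm_iff.2 useq_summable

lemma vseq_norm_summable : Summable (fun m => ‖vseq m‖) := summable_norm_iff.2 vseq_summable

lemma wseq_summable : Summable wseq := by
  have h := summable_norm_sum_mul_antidiagonal_of_summable_norm
    vseq_norm_summable useq_norm_summable
  have := summable_norm_iff.1 h
  exact this

lemma wseq_tsum : ∑' m, wseq m = (∑' m, vseq m) * (∑' m, useq m) := by
  rw [tsum_mul_tsum_eq_tsum_sum_antidiagonal_of_summable_norm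
    vseq_norm_summable useq_norm_summable]
  rfl

lemma vseq_tsum : ∑' m, vseq m = (∑' m, useq m) - x := by
  have he : Summable (fun m : ℕ => if m = 1 then x else 0) := (hasSum_ite_eq 1 x).summable
  have h1 : ∑' m, vseq m = ∑' m : ℕ, (useq m - if m = 1 then x else 0) := by
    apply tsum_congr
    intro m
    exact vseq_eq m
  rw [h1, useq_summable.tsum_sub he, tsum_ite_eq]

lemma wseq_zero : wseq 0 = 0 := by
  simp [wseq, vseq]

lemma wseq_one : wseq 1 = 0 := by
  have : (Finset.HasAntidiagonal.antidiagonal 1 : Finset (ℕ × ℕ)) = {(0, 1), (1, 0)} := rfl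
  rw [wseq, this]
  simp [vseq, useq_zero]

lemma tsum_eq_L : ∑' m, useq m = L := by
  set S := ∑' m, useq m with hS
  have hu := useq_summable
  have hu1 : Summable (fun m : ℕ => useq (m + 1)) := useq_shift_summable
  have hu2 : Summable (fun m : ℕ => useq (m + 2)) := by
    have := (summable_nat_add_iff 2).2 hu
    exact this
  have hw := wseq_summable
  have hw1 : Summable (fun m : ℕ => wseq (m + 1)) := (summable_nat_add_iff 1).2 hw
  have hw2 : Summable (fun m : ℕ => wseq (m + 2)) := (summable_nat_add_iff 2).2 hw
  -- shift identities
  have hshift1 : S = useq 0 + ∑' m, useq (m + 1) := hu.tsum_eq_zero_add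
  have hS1 : ∑' m, useq (m + 1) = S := by
    rw [useq_zero, zero_add] at hshift1
    exact hshift1.symm
  have hshift2 : ∑' m, useq (m + 1) = useq 1 + ∑' m, useq (m + 2) := by
    have := hu1.tsum_eq_zero_add
    simpa using this
  have hwshift : ∑' m, wseq (m + 2) = ∑' m, wseq m := by
    have h1 : ∑' m, wseq m = wseq 0 + ∑' m, wseq (m + 1) := hw.tsum_eq_zero_add
    have h2 : ∑' m, wseq (m + 1) = wseq 1 + ∑' m, wseq (m + 2) := by
      have := hw1.tsum_eq_zero_add
      simpa using this
    rw [h1, h2, wseq_zero, wseq_one, zero_add, zero_add]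
  -- the recurrence, summed
  have hrec : ∑' m, useq (m + 2) = ∑' m : ℕ, (2 * x * useq (m + 1) + wseq (m + 2)) := by
    apply tsum_congr
    intro m
    have := useq_rec (m := m + 2) (by omega)
    simpa using this
  have hsplit : ∑' m : ℕ, (2 * x * useq (m + 1) + wseq (m + 2))
      = 2 * x * (∑' m, useq (m + 1)) + ∑' m, wseq (m + 2) := by
    rw [Summable.tsum_add (hu1.mul_left _) hw2, tsum_mul_left]
  have hkey : S = x + (2 * x * S + (S - x) * S) := by
    calc S = useq 0 + ∑' m, useq (m + 1) := hshift1
    _ = useq 0 + (useq 1 + ∑' m, useq (m + 2)) := by rw [hshift2]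
    _ = x + ∑' m, useq (m + 2) := by rw [useq_zero, useq_one, zero_add]
    _ = x + (2 * x * (∑' m, useq (m + 1)) + ∑' m, wseq (m + 2)) := by
        rw [hrec, hsplit]
    _ = x + (2 * x * S + ∑' m, wseq m) := by rw [hS1, hwshift]
    _ = x + (2 * x * S + (S - x) * S) := by rw [wseq_tsum, vseq_tsum, hS]
  have hsq : (S - L) ^ 2 = 0 := by nlinarith [sqrt2_sq, hkey]
  have h0 : S - L = 0 := by
    have := (pow_eq_zero_iff (n := 2) (by norm_num)).1 hsq
    exact this
  linarith

end Analysis2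

/-- The generating function of the separable permutation counts converges at
`x = 3 - 2√2` and its value there is `√2 - 1`. -/
theorem numSep_genFun_at_radius :
    Summable (fun n : ℕ => (numSep (n + 1) : ℝ) * (3 - 2 * Real.sqrt 2) ^ (n + 1)) ∧
    ∑' n : ℕ, (numSep (n + 1) : ℝ) * (3 - 2 * Real.sqrt 2) ^ (n + 1) = Real.sqrt 2 - 1 := by
  constructor
  · exact useq_shift_summable
  · have hshift : ∑' m, useq m = useq 0 + ∑' m, useq (m + 1) := useq_summable.tsum_eq_zero_add
    rw [useq_zero, zero_add] at hshift
    calc ∑' n : ℕ, (numSep (n + 1) : ℝ) * (3 - 2 * Real.sqrt 2) ^ (n + 1)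
        = ∑' m : ℕ, useq (m + 1) := rfl
      _ = ∑' m : ℕ, useq m := hshift.symm
      _ = Real.sqrt 2 - 1 := tsum_eq_L
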